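/- In the periodic lock scheduling model with k streams with parameters (δ_i, λ_i, μ_i), there exists a feasible schedule σ such that the limit C_{avg,σ} = lim_{T→∞} (1/T) ∑_{t=1}^T C_σ(t) exists and is finite. (Lemma 3.2.) -/
import Mathlib


/-- A travel direction: downstream `D` or upstream `U`. -/
inductive Dir : Type
  | D | U
deriving DecidableEq

/-- An action of the lock operator in a period: process downstream-waiting
vessels (`D`), process upstream-waiting vessels (`U`), or wait (`W`). -/
inductive Act : Type
  | D | U | W
deriving DecidableEq

/-- The action processing vessels of direction `δ`. -/
def Dir.toAct : Dir → Act
  | Dir.D => Act.D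
  | Dir.U => Act.U

/-- The opposite direction. -/
def Dir.flip : Dir → Dir
  | Dir.D => Dir.U
  | Dir.U => Dir.D

/-- A schedule `σ : ℕ → Act` (time starts at `t = 1`) is feasible if the
subsequence of non-`W` actions strictly alternates between `D` and `U`:
any two non-`W` actions with only `W`'s in between must differ. -/
def Feasible (σ : ℕ → Act) : Prop :=
  ∀ t t' : ℕ, 1 ≤ t → t < t' → σ t ≠ Act.W → σ t' ≠ Act.W →
    (∀ s : ℕ, t < s → s < t' → σ s = Act.W) → σ t' ≠ σ t

/-- The number of vessels arriving from direction `δ` at time `t`, for `k`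
streams with directions `dir`, periodicities `lam` and offsets `mu`:
stream `i` has an arrival at `t` iff `t ≡ mu i (mod lam i)`. -/
def arrivals (k : ℕ) (dir : Fin k → Dir) (lam mu : Fin k → ℕ) (δ : Dir) (t : ℕ) : ℕ :=
  ∑ i ∈ Finset.univ.filter (fun i => dir i = δ),
    if t % lam i = mu i % lam i then 1 else 0

/-- The queue length `n_δ(t)`: number of vessels waiting at the lock in
direction `δ` at time `t`, given arrival pattern `a` and schedule `σ`. -/
def queueLen (a : Dir → ℕ → ℕ) (σ : ℕ → Act) (δ : Dir) : ℕ → ℕ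
  | 0 => 0
  | t + 1 => if σ (t + 1) = δ.toAct then 0 else queueLen a σ δ t + a δ (t + 1)

/-- The waiting cost `C_σ(t) = n_D(t) + n_U(t)` in period `t`. -/
def lockCost (a : Dir → ℕ → ℕ) (σ : ℕ → Act) (t : ℕ) : ℕ :=
  queueLen a σ Dir.D t + queueLen a σ Dir.U t

/-- The long-run average waiting time of `σ` exists and equals `L`. -/
def AvgCostIs (a : Dir → ℕ → ℕ) (σ : ℕ → Act) (L : ℝ) : Prop :=
  Filter.Tendsto (fun T : ℕ => (∑ t ∈ Finset.Icc 1 T, (lockCost a σ t : ℝ)) / T)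
    Filter.atTop (nhds L)

/-- A schedule is single-wait if no two consecutive periods are both `W`. -/
def SingleWait (σ : ℕ → Act) : Prop :=
  ∀ t : ℕ, 1 ≤ t → ¬(σ t = Act.W ∧ σ (t + 1) = Act.W)

/-- A schedule is periodic with period `P` if `σ (t + P) = σ t` for all `t ≥ 1`. -/
def PeriodicSched (σ : ℕ → Act) (P : ℕ) : Prop :=
  ∀ t : ℕ, 1 ≤ t → σ (t + P) = σ t


/-- Cesàro average of an (eventually) periodic real sequence converges. -/
lemma avg_of_periodic (f : ℕ → ℝ) (P : ℕ) (hP : 0 < P)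
    (hf : ∀ t, 1 ≤ t → f (t + P) = f t) :
    Filter.Tendsto (fun T : ℕ => (∑ t ∈ Finset.Icc 1 T, f t) / T) Filter.atTop
      (nhds ((∑ t ∈ Finset.Icc 1 P, f t) / P)) := by
  set S : ℝ := ∑ t ∈ Finset.Icc 1 P, f t with hS
  set h : ℕ → ℝ := fun T => ∑ t ∈ Finset.Icc 1 T, f t with hh
  have hPne : (P : ℝ) ≠ 0 := Nat.cast_ne_zero.mpr hP.ne'
  have hstep : ∀ n : ℕ, h (n + 1) = h n + f (n + 1) := by
    intro n
    exact Finset.sum_Icc_succ_top (by omega) f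
  have key : ∀ T, h (T + P) = h T + S := by
    intro T
    induction T with
    | zero => simp [hh, hS]
    | succ n ih =>
      have e1 : n + 1 + P = (n + P) + 1 := by omega
      rw [e1, hstep (n + P), ih, show n + P + 1 = (n + 1) + P by omega,
        hf (n + 1) (by omega), hstep n]
      ring
  have hq : ∀ q r : ℕ, h (q * P + r) = q * S + h r := by
    intro q
    induction q with
    | zero => intro r; simp
    | succ n ih =>
      intro r
      have e1 : (n + 1) * P + r = (n * P + r) + P := by ring
      rw [e1, key, ih]
      push_cast
      ring
  have hT : ∀ T : ℕ, h T = (T / P : ℕ) * S + h (T % P) := by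
    intro T
    have e0 : T = T / P * P + T % P := (Nat.div_add_mod' T P).symm
    conv_lhs => rw [e0]
    exact hq _ _
  set C : ℝ := ∑ r ∈ Finset.range P, |h r - r * (S / P)| with hC
  have hbound : ∀ T : ℕ, |h T - T * (S / P)| ≤ C := by
    intro T
    have hr : T % P < P := Nat.mod_lt _ hP
    have e : h T - T * (S / P) = h (T % P) - (T % P : ℕ) * (S / P) := by
      rw [hT T]
      have hc : (T : ℝ) = (T / P : ℕ) * (P : ℝ) + (T % P : ℕ) := by
        exact_mod_cast (Nat.div_add_mod' T P).symm
      rw [hc]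
      field_simp
      ring
    rw [e]
    exact Finset.single_le_sum (f := fun r => |h r - (r : ℝ) * (S / P)|)
      (fun _ _ => abs_nonneg _) (Finset.mem_range.mpr hr)
  have h0 : Filter.Tendsto (fun T : ℕ => (h T - T * (S / P)) / T) Filter.atTop (nhds 0) := by
    refine squeeze_zero_norm (fun T => ?_) (tendsto_const_div_atTop_nhds_zero_nat C)
    rcases Nat.eq_zero_or_pos T with rfl | hTpos
    · simp
    · rw [Real.norm_eq_abs, abs_div, abs_of_nonneg (by positivity : (0:ℝ) ≤ (T:ℝ))]
      exact div_le_div_of_nonneg_right (hbound T) (Nat.cast_nonneg T)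
  have heq : ∀ᶠ T : ℕ in Filter.atTop, h T / T = S / P + (h T - T * (S / P)) / T := by
    filter_upwards [Filter.eventually_ge_atTop 1] with T hT1
    have hTne : (T : ℝ) ≠ 0 := Nat.cast_ne_zero.mpr (by omega)
    field_simp
    ring
  have := (tendsto_const_nhds.add h0).congr' (Filter.EventuallyEq.symm heq)
  simpa using this

/-- **Lemma 3.2.** There exists a feasible schedule whose long-run
average waiting time exists and is finite. -/
theorem exists_feasible_with_finite_avg (k : ℕ) (dir : Fin k → Dir) (lam mu : Fin k → ℕ)
    (hlam : ∀ i, 1 ≤ lam i) (hmu : ∀ i, 1 ≤ mu i ∧ mu i ≤ lam i) :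
    ∃ (σ : ℕ → Act) (L : ℝ), Feasible σ ∧ AvgCostIs (arrivals k dir lam mu) σ L := by
  set a : Dir → ℕ → ℕ := arrivals k dir lam mu with ha
  set σ : ℕ → Act := fun t => if t % 2 = 1 then Act.D else Act.U with hσ
  -- never W
  have hnW : ∀ t, σ t ≠ Act.W := by
    intro t
    simp only [hσ]
    split <;> simp
  -- feasibility
  have hfeas : Feasible σ := by
    intro t t' ht htt' _ _ hW
    have ht' : t' = t + 1 := by
      by_contra hne
      exact hnW (t + 1) (hW (t + 1) (by omega) (by omega))
    subst ht'
    simp only [hσ]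
    rcases Nat.mod_two_eq_zero_or_one t with hp | hp <;>
      simp [hp, Nat.add_mod, Nat.mod_two_eq_zero_or_one] <;> omega
  -- closed form for the queues
  have qD : ∀ t, queueLen a σ Dir.D t
      = if t % 2 = 1 then 0 else if t = 0 then 0 else a Dir.D t := by
    intro t
    induction t with
    | zero => simp [queueLen]
    | succ n ih =>
      by_cases hp : (n + 1) % 2 = 1
      · have : σ (n + 1) = Dir.D.toAct := by simp [hσ, hp, Dir.toAct]
        simp [queueLen, this, hp]
      · have hσn : σ (n + 1) = Act.U := by simp [hσ, hp]
        have hne : σ (n + 1) ≠ Dir.D.toAct := by simp [hσn, Dir.toAct]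
        have hn : n % 2 = 1 := by omega
        simp [queueLen, hne, ih, hn, hp]
  have qU : ∀ t, queueLen a σ Dir.U t
      = if t % 2 = 1 then a Dir.U t else 0 := by
    intro t
    induction t with
    | zero => simp [queueLen]
    | succ n ih =>
      by_cases hp : (n + 1) % 2 = 1
      · have hσn : σ (n + 1) = Act.D := by simp [hσ, hp]
        have hne : σ (n + 1) ≠ Dir.U.toAct := by simp [hσn, Dir.toAct]
        have hn : n % 2 = 0 := by omega
        simp [queueLen, hne, ih, hn, hp]
      · have : σ (n + 1) = Dir.U.toAct := by simp [hσ, hp, Dir.toAct]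
        simp [queueLen, this, hp]
  have lc : ∀ t, lockCost a σ t = if t % 2 = 1 then a Dir.U t else
      (if t = 0 then 0 else a Dir.D t) := by
    intro t
    rw [lockCost, qD t, qU t]
    rcases Nat.mod_two_eq_zero_or_one t with hp | hp <;> simp [hp]
  -- the period
  set P : ℕ := 2 * ∏ i, lam i with hPdef
  have hprodpos : 0 < ∏ i, lam i := Finset.prod_pos (fun i _ => hlam i)
  have hP : 0 < P := by positivity
  have hdvd : ∀ i, lam i ∣ P := fun i =>
    Dvd.dvd.mul_left (Finset.dvd_prod_of_mem lam (Finset.mem_univ i)) 2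
  have hper2 : ∀ t : ℕ, (t + P) % 2 = t % 2 := by
    intro t
    simp [hPdef, Nat.add_mul_mod_self_left]
  have haper : ∀ δ t, a δ (t + P) = a δ t := by
    intro δ t
    simp only [ha, arrivals]
    refine Finset.sum_congr rfl (fun i _ => ?_)
    obtain ⟨c, hc⟩ := hdvd i
    rw [hc, Nat.add_mul_mod_self_left]
  have hcostper : ∀ t, 1 ≤ t → lockCost a σ (t + P) = lockCost a σ t := by
    intro t ht
    have h1 : t ≠ 0 := by omega
    have h2 : t + P ≠ 0 := by omega
    rw [lc, lc, hper2 t, haper, haper]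
    rcases Nat.mod_two_eq_zero_or_one t with hp | hp <;> simp [hp, h1, h2]
  refine ⟨σ, (∑ t ∈ Finset.Icc 1 P, (lockCost a σ t : ℝ)) / P, hfeas, ?_⟩
  exact avg_of_periodic (fun t => (lockCost a σ t : ℝ)) P hP
    (fun t ht => Nat.cast_inj.mpr (hcostper t ht))
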